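/- For u(x) = c/(1 + b²|x|²)² with b, c > 0 and ρ = b³/(cπ²), one has 2u(x) − ρ(u∗u)(x) = 6c(5 + 2b²|x|²)/((1 + b²|x|²)²(4 + b²|x|²)²) ≥ 0 for all x ∈ ℝ³. -/

import Mathlib

set_option maxHeartbeats 1000000
open MeasureTheory Real Set Filter
noncomputable section

lemma aux_tendsto_texp {a : ℝ} (ha : 0 < a) :
    Tendsto (fun t : ℝ => t * exp (-(a*t))) atTop (nhds 0) := by
  have h0 : Tendsto (fun t : ℝ => a * t) atTop atTop :=
    Tendsto.const_mul_atTop ha tendsto_id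
  have := (tendsto_pow_mul_exp_neg_atTop_nhds_zero 1).comp h0
  have h2 := this.const_mul (1/a)
  simp only [mul_zero] at h2
  refine h2.congr fun t => ?_
  simp only [Function.comp_apply, pow_one]
  field_simp

lemma aux_tendsto_exp {a : ℝ} (ha : 0 < a) :
    Tendsto (fun t : ℝ => exp (-(a*t))) atTop (nhds 0) := by
  have h0 : Tendsto (fun t : ℝ => a * t) atTop atTop :=
    Tendsto.const_mul_atTop ha tendsto_id
  exact tendsto_exp_neg_atTop_nhds_zero.comp h0

-- L0: ∫ t in Ioi 0, t * exp(-(a*t)) = 1/a^2, with integrability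
lemma rep_int {a : ℝ} (ha : 0 < a) :
    IntegrableOn (fun t : ℝ => t * exp (-(a*t))) (Ioi 0) ∧
    ∫ t in Ioi 0, t * exp (-(a*t)) = 1/a^2 := by
  have hderiv : ∀ t ∈ Ici (0:ℝ),
      HasDerivAt (fun t : ℝ => -(t/a + 1/a^2) * exp (-(a*t))) (t * exp (-(a*t))) t := by
    intro t _
    have h1 : HasDerivAt (fun t : ℝ => -(t/a + 1/a^2)) (-(1/a)) t := by
      have := ((hasDerivAt_id t).div_const a).add_const (1/a^2)
      exact this.neg
    have h2 : HasDerivAt (fun t : ℝ => exp (-(a*t))) (-a * exp (-(a*t))) t := by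
      have := (((hasDerivAt_id t).const_mul a).neg).exp
      simpa [mul_comm] using this
    have := h1.mul h2
    refine this.congr_deriv ?_
    field_simp
    ring
  have hpos : ∀ t ∈ Ioi (0:ℝ), 0 ≤ t * exp (-(a*t)) := by
    intro t ht
    have : (0:ℝ) < t := ht
    positivity
  have htend : Tendsto (fun t : ℝ => -(t/a + 1/a^2) * exp (-(a*t))) atTop (nhds 0) := by
    have := ((aux_tendsto_texp ha).const_mul (-(1/a))).add
      ((aux_tendsto_exp ha).const_mul (-(1/a^2)))
    simp only [mul_zero, add_zero] at this
    refine this.congr fun t => ?_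
    ring
  refine ⟨integrableOn_Ioi_deriv_of_nonneg' hderiv hpos htend, ?_⟩
  have := integral_Ioi_of_hasDerivAt_of_nonneg' hderiv hpos htend
  rw [this]
  simp

abbrev Vec := EuclideanSpace ℝ (Fin 3)

lemma rep_lint {a : ℝ} (ha : 0 < a) :
    ∫⁻ t in Ioi 0, ENNReal.ofReal (t * exp (-(a*t))) = ENNReal.ofReal (1/a^2) := by
  rw [← (rep_int ha).2]
  rw [← ofReal_integral_eq_lintegral_ofReal (rep_int ha).1]
  exact (ae_restrict_iff' measurableSet_Ioi).2 (Filter.Eventually.of_forall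
    (fun t ht => by have : (0:ℝ) < t := ht; positivity))

lemma gauss_integrable {p : ℝ} (hp : 0 < p) :
    Integrable (fun y : Vec => exp (-(p * ‖y‖^2))) := by
  have := (GaussianFourier.integrable_cexp_neg_mul_sq_norm_add (V := Vec)
    (b := (p:ℂ)) (by simpa using hp) 0 0).norm
  refine this.congr (Filter.Eventually.of_forall fun y => ?_)
  simp only [Complex.norm_exp, Complex.add_re, Complex.mul_re,
    Complex.neg_re, Complex.ofReal_re, Complex.ofReal_im, Complex.neg_im, Complex.zero_re,
    Complex.zero_im]
  norm_num
  left
  rw [← Complex.ofReal_pow]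
  exact Complex.ofReal_re _

lemma gauss_value {p : ℝ} (hp : 0 < p) :
    ∫ y : Vec, exp (-(p * ‖y‖^2)) = (π/p) ^ ((3:ℝ)/2) := by
  have := GaussianFourier.integral_rexp_neg_mul_sq_norm (V := Vec) hp
  simp only [neg_mul] at this ⊢
  rw [this]
  norm_num [finrank_euclideanSpace_fin]

-- completion of square identity
lemma sq_complete {p q : ℝ} (hp : 0 < p) (hq : 0 < q) (x y : Vec) :
    p * ‖x - y‖^2 + q * ‖y‖^2
      = (p+q) * ‖y - (p/(p+q)) • x‖^2 + (p*q/(p+q)) * ‖x‖^2 := by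
  have hpq : (0:ℝ) < p + q := by linarith
  have h1 : ‖x - y‖^2 = ‖x‖^2 - 2 * inner ℝ x y + ‖y‖^2 := by
    rw [@norm_sub_sq_real Vec]
  have h2 : ‖y - (p/(p+q)) • x‖^2
      = ‖y‖^2 - 2 * (p/(p+q)) * inner ℝ x y + (p/(p+q))^2 * ‖x‖^2 := by
    rw [@norm_sub_sq_real Vec, real_inner_smul_right, norm_smul, real_inner_comm]
    have hn : ‖p / (p+q)‖ = p/(p+q) := by
      rw [Real.norm_eq_abs, abs_of_pos (div_pos hp hpq)]
    rw [hn]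
    ring
  rw [h1, h2]
  field_simp
  ring

lemma gauss_conv {p q : ℝ} (hp : 0 < p) (hq : 0 < q) (x : Vec) :
    Integrable (fun y : Vec => exp (-(p * ‖x - y‖^2 + q * ‖y‖^2))) ∧
    ∫ y : Vec, exp (-(p * ‖x - y‖^2 + q * ‖y‖^2))
      = (π/(p+q)) ^ ((3:ℝ)/2) * exp (-(p*q/(p+q) * ‖x‖^2)) := by
  have hpq : (0:ℝ) < p + q := by linarith
  set m : Vec := (p/(p+q)) • x with hm
  have key : ∀ y : Vec, exp (-(p * ‖x - y‖^2 + q * ‖y‖^2))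
      = exp (-(p*q/(p+q) * ‖x‖^2)) * exp (-((p+q) * ‖y - m‖^2)) := by
    intro y
    rw [← Real.exp_add]
    congr 1
    rw [sq_complete hp hq x y]
    ring
  constructor
  · have hi : Integrable (fun y : Vec =>
        exp (-(p*q/(p+q) * ‖x‖^2)) * exp (-((p+q) * ‖y - m‖^2))) :=
      ((gauss_integrable hpq).comp_sub_right m).const_mul _
    exact hi.congr (Filter.Eventually.of_forall fun y => (key y).symm)
  · calc ∫ y : Vec, exp (-(p * ‖x - y‖^2 + q * ‖y‖^2))
        = ∫ y : Vec, exp (-(p*q/(p+q) * ‖x‖^2)) * exp (-((p+q) * ‖y - m‖^2)) := by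
          exact integral_congr_ae (Filter.Eventually.of_forall key)
      _ = exp (-(p*q/(p+q) * ‖x‖^2)) * ∫ y : Vec, exp (-((p+q) * ‖y - m‖^2)) := by
          rw [integral_const_mul]
      _ = exp (-(p*q/(p+q) * ‖x‖^2)) * ∫ y : Vec, exp (-((p+q) * ‖y‖^2)) := by
          rw [integral_sub_right_eq_self (fun y : Vec => exp (-((p+q) * ‖y‖^2))) m]
      _ = (π/(p+q)) ^ ((3:ℝ)/2) * exp (-(p*q/(p+q) * ‖x‖^2)) := by
          rw [gauss_value hpq]; ring

lemma gamma52 : Real.Gamma ((5:ℝ)/2) = 3/4 * sqrt π := by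
  have h12 : Real.Gamma ((1:ℝ)/2) = sqrt π := by
    simpa [one_div] using Real.Gamma_one_half_eq
  have h32 : Real.Gamma ((3:ℝ)/2) = 1/2 * sqrt π := by
    rw [show (3:ℝ)/2 = 1/2 + 1 by norm_num, Real.Gamma_add_one (by norm_num), h12]
  rw [show (5:ℝ)/2 = 3/2 + 1 by norm_num, Real.Gamma_add_one (by norm_num), h32]
  ring

lemma gamma_int {κ : ℝ} (hκ : 0 < κ) :
    IntegrableOn (fun t : ℝ => t ^ ((3:ℝ)/2) * exp (-(κ*t))) (Ioi 0) ∧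
    ∫ t in Ioi 0, t ^ ((3:ℝ)/2) * exp (-(κ*t)) = (1/κ) ^ ((5:ℝ)/2) * (3/4 * sqrt π) := by
  constructor
  · have h := Real.GammaIntegral_convergent (s := (5:ℝ)/2) (by norm_num)
    have h2 : IntegrableOn (fun x : ℝ => exp (-(κ * x)) * (κ * x) ^ ((5:ℝ)/2 - 1)) (Ioi 0) := by
      have := (integrableOn_Ioi_comp_mul_left_iff
        (fun x : ℝ => exp (-x) * x ^ ((5:ℝ)/2 - 1)) 0 hκ).2 (by simpa using h)
      simpa using this
    have h3 : IntegrableOn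
        (fun x : ℝ => (κ ^ ((3:ℝ)/2))⁻¹ * (exp (-(κ*x)) * (κ*x) ^ ((5:ℝ)/2 - 1))) (Ioi 0) :=
      h2.const_mul _
    refine h3.congr_fun (fun t ht => ?_) measurableSet_Ioi
    have ht' : (0:ℝ) < t := ht
    have : ((5:ℝ)/2 - 1) = (3:ℝ)/2 := by norm_num
    beta_reduce
    rw [this, Real.mul_rpow hκ.le ht'.le]
    have hpos : (0:ℝ) < κ ^ ((3:ℝ)/2) := Real.rpow_pos_of_pos hκ _
    field_simp
  · rw [show ((3:ℝ)/2) = (5:ℝ)/2 - 1 by norm_num]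
    rw [Real.integral_rpow_mul_exp_neg_mul_Ioi (by norm_num) hκ, gamma52]

lemma final_1d {R : ℝ} (hR : 0 ≤ R) :
    IntegrableOn (fun σ : ℝ => σ*(1+σ) * ((1+σ)^2 + R*σ) ^ (-(5:ℝ)/2)) (Ioi 0) ∧
    ∫ σ in Ioi 0, σ*(1+σ) * ((1+σ)^2 + R*σ) ^ (-(5:ℝ)/2) = 8/(3*(4+R)^2) := by
  set m : ℝ := 2 + R with hm
  set a : ℝ := 4/(3*(4+R)^2) with ha
  have h4R : (0:ℝ) < 4 + R := by linarith
  have hQpos : ∀ σ : ℝ, 0 ≤ σ → 0 < (1+σ)^2 + R*σ := by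
    intro σ hσ
    have : (0:ℝ) < (1+σ)^2 := by positivity
    nlinarith
  set F : ℝ → ℝ := fun σ =>
    a * (σ^3 + (3*m/2)*σ^2 - (3*m/2)*σ - 1) * ((1+σ)^2 + R*σ) ^ (-(3:ℝ)/2) with hF
  have hderiv : ∀ σ ∈ Ici (0:ℝ),
      HasDerivAt F (σ*(1+σ) * ((1+σ)^2 + R*σ) ^ (-(5:ℝ)/2)) σ := by
    intro σ hσ
    have hσ0 : (0:ℝ) ≤ σ := hσ
    have hQ := hQpos σ hσ0
    have hN : HasDerivAt (fun σ : ℝ => a * (σ^3 + (3*m/2)*σ^2 - (3*m/2)*σ - 1))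
        (a * (3*σ^2 + (3*m/2)*(2*σ) - (3*m/2))) σ := by
      have : HasDerivAt (fun σ : ℝ => σ^3 + (3*m/2)*σ^2 - (3*m/2)*σ - 1)
          (3*σ^2 + (3*m/2)*(2*σ) - (3*m/2)) σ := by
        have h1 := hasDerivAt_pow 3 σ
        have h2 := (hasDerivAt_pow 2 σ).const_mul (3*m/2)
        have h3 := (hasDerivAt_id σ).const_mul (3*m/2)
        have := ((h1.add h2).sub h3).sub_const 1
        refine this.congr_deriv ?_; push_cast; ring
      exact this.const_mul a
    have hQd : HasDerivAt (fun σ : ℝ => (1+σ)^2 + R*σ) (2*(1+σ) + R) σ := by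
      have h1 : HasDerivAt (fun σ : ℝ => (1+σ)^2) (2*(1+σ)) σ := by
        have := ((hasDerivAt_id σ).const_add 1).pow 2
        refine this.congr_deriv ?_; simp
      have h2 := (hasDerivAt_id σ).const_mul R
      exact h1.add (by simpa using h2)
    have hQr : HasDerivAt (fun σ : ℝ => ((1+σ)^2 + R*σ) ^ (-(3:ℝ)/2))
        ((-(3:ℝ)/2) * ((1+σ)^2 + R*σ) ^ (-(3:ℝ)/2 - 1) * (2*(1+σ) + R)) σ := by
      have := hQd.rpow_const (p := -(3:ℝ)/2) (Or.inl hQ.ne')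
      convert this using 1
      ring
    have := hN.mul hQr
    refine this.congr_deriv ?_
    symm
    have he : (-(3:ℝ)/2 - 1) = -(5:ℝ)/2 := by norm_num
    rw [he]
    set q : ℝ := (1+σ)^2 + R*σ
    have hq32 : q ^ (-(3:ℝ)/2) = q * q ^ (-(5:ℝ)/2) := by
      rw [← Real.rpow_one_add' hQ.le (by norm_num : (1:ℝ) + (-(5:ℝ))/2 ≠ 0)]
      norm_num
    rw [hq32]
    have hq0 : q ≠ 0 := hQ.ne'
    have h4 : (4+R) ≠ 0 := h4R.ne'
    simp only [q, ha, hm]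
    field_simp
    ring
  have hpos : ∀ σ ∈ Ioi (0:ℝ), 0 ≤ σ*(1+σ) * ((1+σ)^2 + R*σ) ^ (-(5:ℝ)/2) := by
    intro σ hσ
    have hσ' : (0:ℝ) < σ := hσ
    have := Real.rpow_pos_of_pos (hQpos σ hσ'.le) (-(5:ℝ)/2)
    positivity
  have htend : Tendsto F atTop (nhds a) := by
    have h1 : Tendsto (fun σ : ℝ => 1 + (3*m/2)*σ⁻¹ - (3*m/2)*σ⁻¹^2 - σ⁻¹^3)
        atTop (nhds 1) := by
      have hinv : Tendsto (fun σ : ℝ => σ⁻¹) atTop (nhds 0) := tendsto_inv_atTop_zero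
      have := ((hinv.const_mul (3*m/2)).const_add 1).sub
        ((hinv.pow 2).const_mul (3*m/2)) |>.sub (hinv.pow 3)
      simpa using this
    have h2 : Tendsto (fun σ : ℝ => σ^2 / ((1+σ)^2 + R*σ)) atTop (nhds 1) := by
      have hinv : Tendsto (fun σ : ℝ => σ⁻¹) atTop (nhds 0) := tendsto_inv_atTop_zero
      have hden : Tendsto (fun σ : ℝ => (σ⁻¹ + 1)^2 + R*σ⁻¹) atTop (nhds 1) := by
        have := ((hinv.add_const 1).pow 2).add (hinv.const_mul R)
        simpa using this
      have := hden.inv₀ (by norm_num)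
      simp only [inv_one] at this
      refine this.congr' ?_
      filter_upwards [eventually_gt_atTop (0:ℝ)] with σ hσ
      rw [eq_div_iff (by positivity)]
      field_simp
    have h3 : Tendsto (fun σ : ℝ => (σ^2 / ((1+σ)^2 + R*σ)) ^ ((3:ℝ)/2))
        atTop (nhds 1) := by
      have hc : ContinuousAt (fun y : ℝ => y ^ ((3:ℝ)/2)) 1 :=
        Real.continuousAt_rpow_const 1 _ (Or.inl one_ne_zero)
      have := hc.tendsto.comp h2
      simpa [Function.comp_def] using this
    have h4 := (h1.mul h3).const_mul a
    simp only [mul_one] at h4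
    refine h4.congr' ?_
    filter_upwards [eventually_gt_atTop (0:ℝ)] with σ hσ
    have hQ := hQpos σ hσ.le
    have hs3 : (σ^2 : ℝ) ^ ((3:ℝ)/2) = σ^3 := by
      rw [← Real.rpow_natCast σ 2, ← Real.rpow_mul hσ.le]
      norm_num
    rw [Real.div_rpow (by positivity) hQ.le, hs3]
    rw [hF]
    simp only [show (-3:ℝ)/2 = -((3:ℝ)/2) from by norm_num, Real.rpow_neg hQ.le]
    have hQr : (0:ℝ) < ((1+σ)^2 + R*σ) ^ (-(3:ℝ)/2) := Real.rpow_pos_of_pos hQ _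
    field_simp
  have hval := integral_Ioi_of_hasDerivAt_of_nonneg' hderiv hpos htend
  refine ⟨integrableOn_Ioi_deriv_of_nonneg' hderiv hpos htend, ?_⟩
  rw [hval, hF]
  norm_num
  rw [ha]
  ring

lemma lint_scale (f : ℝ → ENNReal) (hf : Measurable f) {t : ℝ} (ht : 0 < t) :
    ∫⁻ s in Ioi (0:ℝ), f s = ∫⁻ σ in Ioi (0:ℝ), ENNReal.ofReal t * f (t * σ) := by
  have hmap : Measure.map (fun σ : ℝ => t * σ) volume
      = ENNReal.ofReal |t⁻¹| • volume := Real.map_volume_mul_left ht.ne'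
  have hpre : (fun σ : ℝ => t * σ) ⁻¹' (Ioi 0) = Ioi 0 := by
    rw [preimage_const_mul_Ioi₀ 0 ht, zero_div]
  have h1 : ∫⁻ y in Ioi (0:ℝ), f y ∂(Measure.map (fun σ : ℝ => t * σ) volume)
      = ∫⁻ σ in Ioi (0:ℝ), f (t * σ) := by
    rw [setLIntegral_map measurableSet_Ioi hf (by fun_prop), hpre]
  rw [hmap] at h1
  rw [Measure.restrict_smul, lintegral_smul_measure, smul_eq_mul] at h1
  rw [lintegral_const_mul' _ _ ENNReal.ofReal_ne_top]
  rw [← h1, ← mul_assoc, ← ENNReal.ofReal_mul ht.le]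
  rw [abs_of_pos (inv_pos.2 ht), mul_inv_cancel₀ ht.ne', ENNReal.ofReal_one, one_mul]

section Conv
variable {b c : ℝ}

lemma conv_value (hb : 0 < b) (hc : 0 < c) (x : Vec) :
    ∫ y : Vec, (c/(1+b^2*‖x-y‖^2)^2) * (c/(1+b^2*‖y‖^2)^2)
      = 2*c^2*π^2/(b^3*(4+b^2*‖x‖^2)^2) := by
  set R : ℝ := b^2*‖x‖^2 with hR
  have hR0 : 0 ≤ R := by positivity
  -- the integrand
  set A : Vec → ℝ := fun y => (c/(1+b^2*‖x-y‖^2)^2) * (c/(1+b^2*‖y‖^2)^2) with hA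
  have hApos : ∀ y, 0 ≤ A y := by
    intro y
    have h1 : (0:ℝ) < 1+b^2*‖x-y‖^2 := by positivity
    have h2 : (0:ℝ) < 1+b^2*‖y‖^2 := by positivity
    positivity
  -- the parametrized integrand
  set Φ : ℝ → ℝ → Vec → ℝ := fun t s y =>
    c^2 * ((t * exp (-((1+b^2*‖x-y‖^2) * t))) * (s * exp (-((1+b^2*‖y‖^2) * s)))) with hΦ
  -- value of the convolution
  set W : ℝ := 2*c^2*π^2/(b^3*(4+R)^2) with hW
  -- step 1: pointwise representation
  have step1 : ∀ y : Vec, ENNReal.ofReal (A y)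
      = ∫⁻ t in Ioi (0:ℝ), ∫⁻ s in Ioi (0:ℝ), ENNReal.ofReal (Φ t s y) := by
    intro y
    set a1 : ℝ := 1+b^2*‖x-y‖^2 with ha1d
    set a2 : ℝ := 1+b^2*‖y‖^2 with ha2d
    have ha1 : 0 < a1 := by positivity
    have ha2 : 0 < a2 := by positivity
    have inner : ∀ t ∈ Ioi (0:ℝ), ∫⁻ s in Ioi (0:ℝ), ENNReal.ofReal (Φ t s y)
        = (ENNReal.ofReal (c^2) * ENNReal.ofReal (1/a2^2)) * ENNReal.ofReal (t * exp (-(a1*t))) := by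
      intro t ht
      have ht' : (0:ℝ) < t := ht
      have hcong : ∀ s ∈ Ioi (0:ℝ), ENNReal.ofReal (Φ t s y)
          = (ENNReal.ofReal (c^2) * ENNReal.ofReal (t * exp (-(a1*t))))
              * ENNReal.ofReal (s * exp (-(a2*s))) := by
        intro s hs
        have hs' : (0:ℝ) < s := hs
        rw [← ENNReal.ofReal_mul (by positivity), ← ENNReal.ofReal_mul (by positivity)]
        congr 1
        simp only [hΦ]
        ring
      rw [setLIntegral_congr_fun measurableSet_Ioi hcong]
      rw [lintegral_const_mul' _ _ (ENNReal.mul_ne_top ENNReal.ofReal_ne_top ENNReal.ofReal_ne_top)]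
      rw [rep_lint ha2]
      ring
    rw [setLIntegral_congr_fun measurableSet_Ioi inner]
    rw [lintegral_const_mul' _ _ (ENNReal.mul_ne_top ENNReal.ofReal_ne_top ENNReal.ofReal_ne_top)]
    rw [rep_lint ha1]
    rw [← ENNReal.ofReal_mul (by positivity), ← ENNReal.ofReal_mul (by positivity)]
    congr 1
    simp only [hA]
    field_simp
    rw [ha1d, ha2d]
    ring
  -- step 3: gaussian integral in y, for fixed t s > 0
  have step3 : ∀ t ∈ Ioi (0:ℝ), ∀ s ∈ Ioi (0:ℝ),
      ∫⁻ y : Vec, ENNReal.ofReal (Φ t s y)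
        = ENNReal.ofReal (c^2 * (t * s * exp (-(t+s))) * (π/(b^2*(t+s))) ^ ((3:ℝ)/2)
            * exp (-(R*(t*s/(t+s))))) := by
    intro t ht s hs
    have ht' : (0:ℝ) < t := ht
    have hs' : (0:ℝ) < s := hs
    have hp : (0:ℝ) < t*b^2 := by positivity
    have hq : (0:ℝ) < s*b^2 := by positivity
    have hpq : (0:ℝ) < t+s := by positivity
    have hkey : ∀ y : Vec, Φ t s y
        = (c^2*(t*s*exp (-(t+s)))) * exp (-((t*b^2) * ‖x-y‖^2 + (s*b^2) * ‖y‖^2)) := by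
      intro y
      simp only [hΦ]
      have : -((1+b^2*‖y‖^2) * s) + -((1+b^2*‖x-y‖^2) * t)
          = -(t+s) + -((t*b^2) * ‖x-y‖^2 + (s*b^2) * ‖y‖^2) := by ring
      calc c^2 * (t * exp (-((1+b^2*‖x-y‖^2) * t)) * (s * exp (-((1+b^2*‖y‖^2) * s))))
          = c^2*(t*s) * (exp (-((1+b^2*‖y‖^2) * s)) * exp (-((1+b^2*‖x-y‖^2) * t))) := by ring
        _ = c^2*(t*s) * exp (-(t+s) + -((t*b^2) * ‖x-y‖^2 + (s*b^2) * ‖y‖^2)) := by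
            rw [← Real.exp_add, this]
        _ = (c^2*(t*s*exp (-(t+s)))) * exp (-((t*b^2) * ‖x-y‖^2 + (s*b^2) * ‖y‖^2)) := by
            rw [Real.exp_add]; ring
    have hgc := gauss_conv hp hq x
    calc ∫⁻ y : Vec, ENNReal.ofReal (Φ t s y)
        = ∫⁻ y : Vec, ENNReal.ofReal (c^2*(t*s*exp (-(t+s))))
            * ENNReal.ofReal (exp (-((t*b^2) * ‖x-y‖^2 + (s*b^2) * ‖y‖^2))) := by
          refine lintegral_congr fun y => ?_
          rw [← ENNReal.ofReal_mul (by positivity), hkey y]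
      _ = ENNReal.ofReal (c^2*(t*s*exp (-(t+s))))
            * ∫⁻ y : Vec, ENNReal.ofReal (exp (-((t*b^2) * ‖x-y‖^2 + (s*b^2) * ‖y‖^2))) := by
          rw [lintegral_const_mul' _ _ ENNReal.ofReal_ne_top]
      _ = ENNReal.ofReal (c^2*(t*s*exp (-(t+s))))
            * ENNReal.ofReal ((π/((t*b^2)+(s*b^2))) ^ ((3:ℝ)/2)
                * exp (-((t*b^2)*(s*b^2)/((t*b^2)+(s*b^2)) * ‖x‖^2))) := by
          rw [← ofReal_integral_eq_lintegral_ofReal hgc.1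
            (Filter.Eventually.of_forall fun y => by positivity), hgc.2]
      _ = ENNReal.ofReal (c^2 * (t * s * exp (-(t+s))) * (π/(b^2*(t+s))) ^ ((3:ℝ)/2)
            * exp (-(R*(t*s/(t+s))))) := by
          rw [← ENNReal.ofReal_mul (by positivity)]
          congr 1
          have e1 : (t*b^2)+(s*b^2) = b^2*(t+s) := by ring
          have e2 : (t*b^2)*(s*b^2)/(b^2*(t+s)) * ‖x‖^2 = R*(t*s/(t+s)) := by
            rw [hR]
            field_simp
          rw [e1, e2]
          ring
  -- abbreviations for later stages
  set h : ℝ → ℝ → ℝ := fun t s => c^2 * (t * s * exp (-(t+s))) * (π/(b^2*(t+s))) ^ ((3:ℝ)/2)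
      * exp (-(R*(t*s/(t+s)))) with hh
  set CC : ℝ := c^2 * π^((3:ℝ)/2) / b^3 with hCC
  set κ : ℝ → ℝ := fun σ => (1+σ) + R*σ/(1+σ) with hκ
  set g : ℝ → ℝ → ℝ := fun σ t =>
    CC * (σ * (1+σ) ^ (-(3:ℝ)/2)) * (t ^ ((3:ℝ)/2) * exp (-(κ σ * t))) with hg
  have hCCpos : 0 < CC := by
    rw [hCC]
    have := Real.rpow_pos_of_pos pi_pos ((3:ℝ)/2)
    positivity
  have hκpos : ∀ σ : ℝ, 0 < σ → 0 < κ σ := by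
    intro σ hσ
    rw [hκ]
    have h1 : (0:ℝ) < 1+σ := by linarith
    have h2 : 0 ≤ R*σ/(1+σ) := by positivity
    simp only []
    linarith
  -- measurability
  have hΦm : Measurable (fun p : Vec × ℝ × ℝ => ENNReal.ofReal (Φ p.2.1 p.2.2 p.1)) := by
    rw [hΦ]; fun_prop
  have hhm : ∀ t : ℝ, Measurable (fun s : ℝ => ENNReal.ofReal (h t s)) := by
    intro t
    rw [hh]
    fun_prop
  have hgm : Measurable (fun p : ℝ × ℝ => ENNReal.ofReal (g p.1 p.2)) := by
    rw [hg]; fun_prop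
  -- main lintegral computation
  have main : ∫⁻ y : Vec, ENNReal.ofReal (A y) = ENNReal.ofReal W := by
    calc ∫⁻ y : Vec, ENNReal.ofReal (A y)
        = ∫⁻ y : Vec, ∫⁻ t in Ioi (0:ℝ), ∫⁻ s in Ioi (0:ℝ), ENNReal.ofReal (Φ t s y) :=
          lintegral_congr step1
      _ = ∫⁻ t in Ioi (0:ℝ), ∫⁻ y : Vec, ∫⁻ s in Ioi (0:ℝ), ENNReal.ofReal (Φ t s y) := by
          refine lintegral_lintegral_swap ?_
          exact (Measurable.lintegral_prod_right' (f := fun (q : (Vec × ℝ) × ℝ) =>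
            ENNReal.ofReal (Φ q.1.2 q.2 q.1.1)) (by rw [hΦ]; fun_prop)).aemeasurable
      _ = ∫⁻ t in Ioi (0:ℝ), ∫⁻ s in Ioi (0:ℝ), ∫⁻ y : Vec, ENNReal.ofReal (Φ t s y) := by
          refine lintegral_congr fun t => ?_
          refine lintegral_lintegral_swap ?_
          exact (hΦm.comp (by fun_prop : Measurable
            (fun p : Vec × ℝ => (p.1, t, p.2)))).aemeasurable
      _ = ∫⁻ t in Ioi (0:ℝ), ∫⁻ s in Ioi (0:ℝ), ENNReal.ofReal (h t s) := by
          refine setLIntegral_congr_fun measurableSet_Ioi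
            (fun t ht => ?_)
          refine setLIntegral_congr_fun measurableSet_Ioi
            (fun s hs => ?_)
          rw [step3 t ht s hs, hh]
      _ = ∫⁻ t in Ioi (0:ℝ), ∫⁻ σ in Ioi (0:ℝ), ENNReal.ofReal t * ENNReal.ofReal (h t (t*σ)) := by
          refine setLIntegral_congr_fun measurableSet_Ioi
            (fun t ht => ?_)
          exact lint_scale _ (hhm t) ht
      _ = ∫⁻ t in Ioi (0:ℝ), ∫⁻ σ in Ioi (0:ℝ), ENNReal.ofReal (g σ t) := by
          refine setLIntegral_congr_fun measurableSet_Ioi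
            (fun t ht => ?_)
          refine setLIntegral_congr_fun measurableSet_Ioi
            (fun σ hσ => ?_)
          have ht' : (0:ℝ) < t := ht
          have hσ' : (0:ℝ) < σ := hσ
          have hσ1 : (0:ℝ) < 1+σ := by linarith
          rw [← ENNReal.ofReal_mul ht'.le]
          congr 1
          rw [hh, hg]
          have ht32 : t^(3:ℕ) = t^((3:ℝ)/2) * t^((3:ℝ)/2) := by
            rw [← Real.rpow_add ht']
            norm_num
          have hb3 : ((b^2:ℝ))^((3:ℝ)/2) = b^3 := by
            rw [← Real.rpow_natCast b 2, ← Real.rpow_mul hb.le]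
            norm_num
          have hrp : (π/(b^2*(t+t*σ)))^((3:ℝ)/2)
              = π^((3:ℝ)/2) / (b^3 * (t^((3:ℝ)/2) * (1+σ)^((3:ℝ)/2))) := by
            rw [Real.div_rpow pi_pos.le (by positivity)]
            congr 1
            rw [show b^2*(t+t*σ) = (b^2*t)*(1+σ) by ring,
              Real.mul_rpow (by positivity) (by positivity),
              Real.mul_rpow (by positivity) (by positivity), hb3]
            ring
          have hexp : exp (-(t+t*σ)) * exp (-(R*(t*(t*σ)/(t+t*σ)))) = exp (-(κ σ * t)) := by
            rw [← Real.exp_add]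
            congr 1
            rw [hκ]
            have : t+t*σ = t*(1+σ) := by ring
            rw [this]
            field_simp
            ring
          have hneg : (1+σ) ^ (-(3:ℝ)/2) = ((1+σ)^((3:ℝ)/2))⁻¹ := by
            rw [show (-(3:ℝ))/2 = -((3:ℝ)/2) by norm_num, Real.rpow_neg hσ1.le]
          have ht32pos : (0:ℝ) < t^((3:ℝ)/2) := Real.rpow_pos_of_pos ht' _
          have hσ32pos : (0:ℝ) < (1+σ)^((3:ℝ)/2) := Real.rpow_pos_of_pos hσ1 _
          calc t * (c^2 * (t * (t*σ) * exp (-(t+t*σ))) * (π/(b^2*(t+t*σ))) ^ ((3:ℝ)/2)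
                * exp (-(R*(t*(t*σ)/(t+t*σ)))))
              = c^2 * σ * t^(3:ℕ) * (π/(b^2*(t+t*σ))) ^ ((3:ℝ)/2)
                * (exp (-(t+t*σ)) * exp (-(R*(t*(t*σ)/(t+t*σ))))) := by ring
            _ = c^2 * σ * (t^((3:ℝ)/2) * t^((3:ℝ)/2))
                * (π^((3:ℝ)/2) / (b^3 * (t^((3:ℝ)/2) * (1+σ)^((3:ℝ)/2))))
                * exp (-(κ σ * t)) := by rw [ht32, hrp, hexp]
            _ = CC * (σ * (1+σ) ^ (-(3:ℝ)/2)) * (t ^ ((3:ℝ)/2) * exp (-(κ σ * t))) := by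
                rw [hneg, hCC]
                field_simp
      _ = ∫⁻ σ in Ioi (0:ℝ), ∫⁻ t in Ioi (0:ℝ), ENNReal.ofReal (g σ t) := by
          refine lintegral_lintegral_swap ?_
          exact (hgm.comp (by fun_prop : Measurable (fun p : ℝ × ℝ => (p.2, p.1)))).aemeasurable
      _ = ∫⁻ σ in Ioi (0:ℝ), ENNReal.ofReal ((CC * (3/4 * sqrt π))
            * (σ*(1+σ) * ((1+σ)^2 + R*σ) ^ (-(5:ℝ)/2))) := by
          refine setLIntegral_congr_fun measurableSet_Ioi
            (fun σ hσ => ?_)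
          have hσ' : (0:ℝ) < σ := hσ
          have hσ1 : (0:ℝ) < 1+σ := by linarith
          have hκσ := hκpos σ hσ'
          have hcongr : ∀ t ∈ Ioi (0:ℝ), ENNReal.ofReal (g σ t)
              = ENNReal.ofReal (CC * (σ * (1+σ) ^ (-(3:ℝ)/2)))
                  * ENNReal.ofReal (t ^ ((3:ℝ)/2) * exp (-(κ σ * t))) := by
            intro t ht
            have hnn : (0:ℝ) ≤ CC * (σ * (1+σ) ^ (-(3:ℝ)/2)) := by
              have := Real.rpow_pos_of_pos hσ1 (-(3:ℝ)/2)
              positivity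
            rw [hg, ← ENNReal.ofReal_mul hnn]
          rw [setLIntegral_congr_fun measurableSet_Ioi hcongr]
          rw [lintegral_const_mul' _ _ ENNReal.ofReal_ne_top]
          have hnn2 : 0 ≤ᵐ[volume.restrict (Ioi (0:ℝ))]
              fun t : ℝ => t ^ ((3:ℝ)/2) * exp (-(κ σ * t)) := by
            refine (ae_restrict_iff' measurableSet_Ioi).2 (Filter.Eventually.of_forall
              fun t ht => ?_)
            have ht' : (0:ℝ) < t := ht
            have := Real.rpow_pos_of_pos ht' ((3:ℝ)/2)
            positivity
          rw [← ofReal_integral_eq_lintegral_ofReal (gamma_int hκσ).1 hnn2, (gamma_int hκσ).2]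
          rw [← ENNReal.ofReal_mul (by positivity)]
          congr 1
          -- rpow algebra
          set Q : ℝ := (1+σ)^2 + R*σ with hQ
          have hQpos : (0:ℝ) < Q := by rw [hQ]; positivity
          have hκQ : κ σ = Q/(1+σ) := by
            rw [hκ, hQ]
            field_simp
          have h1 : (1/κ σ) ^ ((5:ℝ)/2) = (1+σ)^((5:ℝ)/2) / Q^((5:ℝ)/2) := by
            rw [hκQ, one_div, inv_div, Real.div_rpow hσ1.le hQpos.le]
          have h2 : (1+σ) ^ (-(3:ℝ)/2) * (1+σ)^((5:ℝ)/2) = 1+σ := by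
            rw [← Real.rpow_add hσ1]
            norm_num
          have h3 : Q ^ (-(5:ℝ)/2) = (Q^((5:ℝ)/2))⁻¹ := by
            rw [show (-(5:ℝ))/2 = -((5:ℝ)/2) by norm_num, Real.rpow_neg hQpos.le]
          calc CC * (σ * (1+σ) ^ (-(3:ℝ)/2)) * ((1/κ σ) ^ ((5:ℝ)/2) * (3/4 * sqrt π))
              = (CC * (3/4 * sqrt π)) * (σ * ((1+σ) ^ (-(3:ℝ)/2) * (1+σ)^((5:ℝ)/2))
                  * (Q^((5:ℝ)/2))⁻¹) := by rw [h1]; field_simp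
            _ = (CC * (3/4 * sqrt π)) * (σ*(1+σ) * Q ^ (-(5:ℝ)/2)) := by rw [h2, h3]
      _ = ENNReal.ofReal ((CC * (3/4 * sqrt π)) * (8/(3*(4+R)^2))) := by
          have hpoint : ∀ σ ∈ Ioi (0:ℝ), ENNReal.ofReal ((CC * (3/4 * sqrt π))
              * (σ*(1+σ) * ((1+σ)^2 + R*σ) ^ (-(5:ℝ)/2)))
              = ENNReal.ofReal (CC * (3/4 * sqrt π))
                * ENNReal.ofReal (σ*(1+σ) * ((1+σ)^2 + R*σ) ^ (-(5:ℝ)/2)) := by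
            intro σ hσ
            rw [← ENNReal.ofReal_mul (by positivity)]
          rw [setLIntegral_congr_fun measurableSet_Ioi hpoint]
          rw [lintegral_const_mul' _ _ ENNReal.ofReal_ne_top]
          rw [← ofReal_integral_eq_lintegral_ofReal (final_1d hR0).1 ?_, (final_1d hR0).2]
          swap
          · refine (ae_restrict_iff' measurableSet_Ioi).2 (Filter.Eventually.of_forall
              fun σ hσ => ?_)
            have hσ' : (0:ℝ) < σ := hσ
            have hσ1 : (0:ℝ) < 1+σ := by linarith
            have hQpos : (0:ℝ) < (1+σ)^2 + R*σ := by positivity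
            have := Real.rpow_pos_of_pos hQpos (-(5:ℝ)/2)
            positivity
          rw [← ENNReal.ofReal_mul (by positivity)]
      _ = ENNReal.ofReal W := by
          congr 1
          rw [hCC, hW]
          have hpi : π^((3:ℝ)/2) * sqrt π = π^2 := by
            rw [Real.sqrt_eq_rpow, ← Real.rpow_add pi_pos]
            norm_num
          field_simp
          linear_combination 8 * hpi
  -- conclude
  have hAmeas : AEStronglyMeasurable A (volume : Measure Vec) := by
    rw [hA]
    apply Continuous.aestronglyMeasurable
    have h1 : Continuous fun y : Vec => (1+b^2*‖x-y‖^2)^2 := by fun_prop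
    have h2 : Continuous fun y : Vec => (1+b^2*‖y‖^2)^2 := by fun_prop
    exact (continuous_const.div h1 fun y => by positivity).mul
      (continuous_const.div h2 fun y => by positivity)
  have goal' : ∫ y : Vec, A y = W := by
    rw [integral_eq_lintegral_of_nonneg_ae (Filter.Eventually.of_forall hApos) hAmeas, main,
      ENNReal.toReal_ofReal (by rw [hW]; positivity)]
  rw [hA, hW, hR] at goal'
  simpa using goal'

end Conv

theorem stmt_4 (b c : ℝ) (hb : 0 < b) (hc : 0 < c)
    (u : EuclideanSpace ℝ (Fin 3) → ℝ)
    (hu : ∀ x, u x = c / (1 + b ^ 2 * ‖x‖ ^ 2) ^ 2)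
    (ρ : ℝ) (hρ : ρ = b ^ 3 / (c * π ^ 2)) :
    ∀ x, 2 * u x - ρ * (∫ y, u (x - y) * u y)
        = 6 * c * (5 + 2 * b ^ 2 * ‖x‖ ^ 2)
          / ((1 + b ^ 2 * ‖x‖ ^ 2) ^ 2 * (4 + b ^ 2 * ‖x‖ ^ 2) ^ 2)
      ∧ 0 ≤ 2 * u x - ρ * (∫ y, u (x - y) * u y) := by
  intro x
  have hconv : ∫ y, u (x - y) * u y = 2*c^2*π^2/(b^3*(4+b^2*‖x‖^2)^2) := by
    rw [← conv_value hb hc x]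
    refine integral_congr_ae (Filter.Eventually.of_forall fun y => ?_)
    simp only [hu]
  have h1 : (0:ℝ) < 1 + b^2*‖x‖^2 := by positivity
  have h4 : (0:ℝ) < 4 + b^2*‖x‖^2 := by positivity
  have heq : 2 * u x - ρ * (∫ y, u (x - y) * u y)
      = 6 * c * (5 + 2 * b ^ 2 * ‖x‖ ^ 2)
          / ((1 + b ^ 2 * ‖x‖ ^ 2) ^ 2 * (4 + b ^ 2 * ‖x‖ ^ 2) ^ 2) := by
    rw [hconv, hu x, hρ]
    field_simp
    ring
  refine ⟨heq, ?_⟩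
  rw [heq]
  positivity
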